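/- For fixed integers n ≥ 3 and k ≥ 2, the function h_k(n,x) = binomial(n-x, k) + x·binomial(x, k-1), viewed as a real polynomial function of x on the interval [1, ⌊(n-1)/2⌋], is convex, and hence attains its maximum on that interval at one of the endpoints x = 1 or x = ⌊(n-1)/2⌋. -/

import Mathlib

/-- Real binomial coefficient: `a(a-1)⋯(a-b+1)/b!` when `a ≥ b-1`, and `0` otherwise. -/
noncomputable def rchoose (a : ℝ) (b : ℕ) : ℝ :=
  if (b : ℝ) - 1 ≤ a then (∏ i ∈ Finset.range b, (a - i)) / (Nat.factorial b) else 0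

lemma affine_convexOn {s : Set ℝ} (hs : Convex ℝ s) (p q : ℝ) :
    ConvexOn ℝ s (fun x => p * x + q) := by
  refine ⟨hs, fun x _ y _ a b ha hb hab => le_of_eq ?_⟩
  simp only [smul_eq_mul]
  linear_combination (-q) * hab

lemma prodAux (b : ℕ) (hb : 1 ≤ b) :
    ConvexOn ℝ (Set.Ici ((b : ℝ) - 1)) (fun y : ℝ => ∏ i ∈ Finset.range b, (y - i)) ∧
    MonotoneOn (fun y : ℝ => ∏ i ∈ Finset.range b, (y - i)) (Set.Ici ((b : ℝ) - 1)) ∧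
    ∀ y ∈ Set.Ici ((b : ℝ) - 1), 0 ≤ ∏ i ∈ Finset.range b, (y - i) := by
  induction b, hb using Nat.le_induction with
  | base =>
    simp only [Finset.prod_range_one, Nat.cast_zero, Nat.cast_one, sub_zero]
    refine ⟨?_, ?_, ?_⟩
    · have := affine_convexOn (convex_Ici ((1:ℝ) - 1)) 1 0
      simpa using this
    · exact fun x _ y _ hxy => hxy
    · intro y hy
      simp only [Set.mem_Ici] at hy
      linarith
  | succ b hb ih =>
    obtain ⟨ihc, ihm, ihn⟩ := ih
    have hcast : ((b + 1 : ℕ) : ℝ) - 1 = (b : ℝ) := by push_cast; ring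
    have hsub : Set.Ici ((b : ℝ)) ⊆ Set.Ici ((b : ℝ) - 1) :=
      Set.Ici_subset_Ici.2 (by linarith)
    have hfc : ConvexOn ℝ (Set.Ici ((b : ℝ))) (fun y : ℝ => ∏ i ∈ Finset.range b, (y - i)) :=
      ihc.subset hsub (convex_Ici _)
    have hgc : ConvexOn ℝ (Set.Ici ((b : ℝ))) (fun y : ℝ => y - (b : ℝ)) := by
      have := affine_convexOn (convex_Ici ((b : ℝ))) 1 (-(b : ℝ))
      convert this using 2 with y
      ring
    have hfm : MonotoneOn (fun y : ℝ => ∏ i ∈ Finset.range b, (y - i)) (Set.Ici ((b : ℝ))) :=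
      ihm.mono hsub
    have hgm : MonotoneOn (fun y : ℝ => y - (b : ℝ)) (Set.Ici ((b : ℝ))) :=
      fun x _ y _ hxy => by simpa using hxy
    have hf0 : ∀ ⦃y : ℝ⦄, y ∈ Set.Ici ((b : ℝ)) → 0 ≤ ∏ i ∈ Finset.range b, (y - i) :=
      fun y hy => ihn y (hsub hy)
    have hg0 : ∀ ⦃y : ℝ⦄, y ∈ Set.Ici ((b : ℝ)) → 0 ≤ y - (b : ℝ) :=
      fun y hy => by simp only [Set.mem_Ici] at hy; linarith
    have hmul : ConvexOn ℝ (Set.Ici ((b : ℝ)))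
        ((fun y : ℝ => ∏ i ∈ Finset.range b, (y - i)) * (fun y : ℝ => y - (b : ℝ))) :=
      hfc.mul hgc hf0 hg0 (hfm.monovaryOn hgm)
    rw [hcast]
    refine ⟨?_, ?_, ?_⟩
    · convert hmul using 2 with y
      simp [Finset.prod_range_succ]
    · intro x hx y hy hxy
      simp only [Finset.prod_range_succ]
      exact mul_le_mul (hfm hx hy hxy) (by simpa using hxy) (hg0 hx) (hf0 hy)
    · intro y hy
      simp only [Finset.prod_range_succ]
      exact mul_nonneg (hf0 hy) (hg0 hy)

lemma rchoose_eq {b : ℕ} (hb : 1 ≤ b) (a : ℝ) :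
    rchoose a b = (∏ i ∈ Finset.range b, (max a ((b : ℝ) - 1) - i)) / (Nat.factorial b) := by
  unfold rchoose
  split_ifs with h
  · rw [max_eq_left h]
  · push_neg at h
    rw [max_eq_right h.le]
    rw [Finset.prod_eq_zero (Finset.mem_range.2 (Nat.sub_lt hb Nat.one_pos)) (by
      push_cast [Nat.cast_sub hb]; ring)]
    simp

lemma rchoose_nonneg {b : ℕ} (hb : 1 ≤ b) (a : ℝ) : 0 ≤ rchoose a b := by
  rw [rchoose_eq hb]
  apply div_nonneg _ (by positivity)
  exact (prodAux b hb).2.2 _ (Set.mem_Ici.2 (le_max_right _ _))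

lemma rchoose_mono {b : ℕ} (hb : 1 ≤ b) : Monotone (fun a => rchoose a b) := by
  intro x y hxy
  simp only [rchoose_eq hb]
  have h := (prodAux b hb).2.1 (le_max_right x ((b : ℝ) - 1))
    (le_max_right y ((b : ℝ) - 1)) (max_le_max hxy le_rfl)
  exact div_le_div_of_nonneg_right h (by positivity)

lemma comp_aux {g : ℝ → ℝ} {c : ℝ} (hg : ConvexOn ℝ (Set.Ici c) g)
    (hmono : MonotoneOn g (Set.Ici c)) {f : ℝ → ℝ} {s : Set ℝ}
    (hf : ConvexOn ℝ s f) (hfc : ∀ x ∈ s, c ≤ f x) :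
    ConvexOn ℝ s (fun x => g (f x)) := by
  refine ⟨hf.1, fun x hx y hy a b ha hb hab => ?_⟩
  have hx' : c ≤ f x := hfc x hx
  have hy' : c ≤ f y := hfc y hy
  have hcomb : c ≤ a • f x + b • f y := by
    simp only [smul_eq_mul]
    have hc : a * c + b * c = c := by linear_combination c * hab
    nlinarith [mul_nonneg ha (sub_nonneg.2 hx'), mul_nonneg hb (sub_nonneg.2 hy')]
  have h1 : f (a • x + b • y) ≤ a • f x + b • f y := hf.2 hx hy ha hb hab
  have h2 : g (f (a • x + b • y)) ≤ g (a • f x + b • f y) :=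
    hmono (hfc _ (hf.1 hx hy ha hb hab)) hcomb h1
  exact h2.trans (hg.2 hx' hy' ha hb hab)

lemma rchoose_comp_convexOn {b : ℕ} (hb : 1 ≤ b) {f : ℝ → ℝ} {s : Set ℝ}
    (hf : ConvexOn ℝ s f) : ConvexOn ℝ s (fun x => rchoose (f x) b) := by
  obtain ⟨hPc, hPm, hPn⟩ := prodAux b hb
  have hg : ConvexOn ℝ (Set.Ici ((b : ℝ) - 1))
      (fun y : ℝ => (∏ i ∈ Finset.range b, (y - i)) / (Nat.factorial b)) := by
    have := hPc.smul (c := ((Nat.factorial b : ℝ))⁻¹) (by positivity)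
    simpa [div_eq_inv_mul, smul_eq_mul] using this
  have hgm : MonotoneOn (fun y : ℝ => (∏ i ∈ Finset.range b, (y - i)) / (Nat.factorial b))
      (Set.Ici ((b : ℝ) - 1)) := by
    intro x hx y hy hxy
    have h := hPm hx hy hxy
    exact div_le_div_of_nonneg_right h (by positivity)
  have hinner : ConvexOn ℝ s (fun x => max (f x) ((b : ℝ) - 1)) :=
    hf.sup (convexOn_const _ hf.1)
  have hcomp := comp_aux hg hgm hinner (fun x _ => le_max_right _ _)
  have hfun : (fun x => rchoose (f x) b) =
      fun x => (∏ i ∈ Finset.range b, (max (f x) ((b : ℝ) - 1) - i)) / (Nat.factorial b) :=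
    funext fun x => rchoose_eq hb (f x)
  rw [hfun]
  exact hcomp

theorem hk_convex_max_at_endpoints (n k : ℕ) (hn : 3 ≤ n) (hk : 2 ≤ k) :
    ConvexOn ℝ (Set.Icc (1 : ℝ) (((n - 1) / 2 : ℕ) : ℝ))
      (fun x : ℝ => rchoose ((n : ℝ) - x) k + x * rchoose x (k - 1)) ∧
    ∀ x ∈ Set.Icc (1 : ℝ) (((n - 1) / 2 : ℕ) : ℝ),
      rchoose ((n : ℝ) - x) k + x * rchoose x (k - 1) ≤
        max (rchoose ((n : ℝ) - 1) k + 1 * rchoose 1 (k - 1))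
          (rchoose ((n : ℝ) - (((n - 1) / 2 : ℕ) : ℝ)) k +
            (((n - 1) / 2 : ℕ) : ℝ) * rchoose (((n - 1) / 2 : ℕ) : ℝ) (k - 1)) := by
  set M : ℝ := (((n - 1) / 2 : ℕ) : ℝ) with hM
  have hsconv : Convex ℝ (Set.Icc (1 : ℝ) M) := convex_Icc _ _
  have hk1 : 1 ≤ k := by omega
  have hk1' : 1 ≤ k - 1 := by omega
  have hlin : ConvexOn ℝ (Set.Icc (1 : ℝ) M) (fun x : ℝ => (n : ℝ) - x) := by
    have := affine_convexOn hsconv (-1) (n : ℝ)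
    convert this using 2 with x
    ring
  have hA : ConvexOn ℝ (Set.Icc (1 : ℝ) M) (fun x : ℝ => rchoose ((n : ℝ) - x) k) :=
    rchoose_comp_convexOn hk1 hlin
  have hid : ConvexOn ℝ (Set.Icc (1 : ℝ) M) (fun x : ℝ => x) := by
    have := affine_convexOn hsconv 1 0
    convert this using 2 with x
    ring
  have hRc : ConvexOn ℝ (Set.Icc (1 : ℝ) M) (fun x : ℝ => rchoose x (k - 1)) :=
    rchoose_comp_convexOn hk1' hid
  have hB : ConvexOn ℝ (Set.Icc (1 : ℝ) M) (fun x : ℝ => x * rchoose x (k - 1)) := by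
    have hmono1 : MonotoneOn (fun x : ℝ => x) (Set.Icc (1 : ℝ) M) := fun x _ y _ h => h
    have hmono2 : MonotoneOn (fun x : ℝ => rchoose x (k - 1)) (Set.Icc (1 : ℝ) M) :=
      (rchoose_mono hk1').monotoneOn _
    exact hid.mul hRc (fun x hx => by linarith [hx.1]) (fun x _ => rchoose_nonneg hk1' x)
      (hmono1.monovaryOn hmono2)
  have hconv : ConvexOn ℝ (Set.Icc (1 : ℝ) M)
      (fun x : ℝ => rchoose ((n : ℝ) - x) k + x * rchoose x (k - 1)) := hA.add hB
  refine ⟨hconv, ?_⟩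
  intro x hx
  have hM1 : 1 ≤ (n - 1) / 2 := by omega
  have hM1' : (1 : ℝ) ≤ M := by rw [hM]; exact_mod_cast hM1
  have h1mem : (1 : ℝ) ∈ Set.Icc (1 : ℝ) M := ⟨le_rfl, hM1'⟩
  have hMmem : M ∈ Set.Icc (1 : ℝ) M := ⟨hM1', le_rfl⟩
  have hz : x ∈ segment ℝ (1 : ℝ) M := by rwa [segment_eq_Icc hM1']
  exact hconv.le_on_segment h1mem hMmem hz
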